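/- Let A be a symmetric positive definite n×n real matrix and 1 < γ < 2. Then for every x ≠ 0 and every y in ℝ^n, y^T (A + (γ-2)(Ax)(Ax)^T/(x^T A x)) y ≥ (γ-1) λ₁ |y|², where λ₁ > 0 is the smallest eigenvalue of A. In particular the matrix A + (γ-2)(Ax)(Ax)^T/(x^T A x) is positive definite. -/

import Mathlib

open Matrix
open scoped MatrixOrder

theorem quad_lb_aux {n : ℕ} (A : Matrix (Fin n) (Fin n) ℝ) (hA : A.PosDef) (c : ℝ)
    (hc : ∀ i, c ≤ hA.isHermitian.eigenvalues i) (y : Fin n → ℝ) :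
    c * (∑ i, y i ^ 2) ≤ y ⬝ᵥ A.mulVec y := by
  have hB : (A - c • 1).PosSemidef := by
    have hsp := hA.isHermitian.spectral_theorem
    simp only [Unitary.conjStarAlgAut_apply, Unitary.coe_star, star_eq_conjTranspose] at hsp
    have hU : (hA.isHermitian.eigenvectorUnitary : Matrix (Fin n) (Fin n) ℝ) *
        (hA.isHermitian.eigenvectorUnitary : Matrix (Fin n) (Fin n) ℝ)ᴴ = 1 :=
      hA.isHermitian.eigenvectorUnitary.2.2
    have hd : (diagonal (fun i => hA.isHermitian.eigenvalues i - c) :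
        Matrix (Fin n) (Fin n) ℝ) =
        diagonal (RCLike.ofReal ∘ hA.isHermitian.eigenvalues) - c • 1 := by
      ext i j
      by_cases h : i = j <;>
        simp [h, Matrix.one_apply, Matrix.diagonal_apply]
    have : A - c • 1 = (hA.isHermitian.eigenvectorUnitary : Matrix (Fin n) (Fin n) ℝ) *
        (diagonal (fun i => hA.isHermitian.eigenvalues i - c)) *
        (hA.isHermitian.eigenvectorUnitary : Matrix (Fin n) (Fin n) ℝ)ᴴ := by
      rw [hd, Matrix.mul_sub, Matrix.sub_mul, ← hsp]
      congr 1
      simp only [Matrix.mul_smul, Matrix.smul_mul, Matrix.mul_one]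
      rw [hU]
    rw [this]
    exact (posSemidef_diagonal_iff.mpr fun i => sub_nonneg.2 (hc i)).mul_mul_conjTranspose_same _
  have h0 := hB.dotProduct_mulVec_nonneg y
  simp only [sub_mulVec, dotProduct_sub, smul_mulVec, one_mulVec, dotProduct_smul,
    star_trivial, RCLike.ofReal_real_eq_id, id, smul_eq_mul] at h0
  have hyy : y ⬝ᵥ y = ∑ i, y i ^ 2 := by simp [dotProduct, sq]
  rw [hyy] at h0
  linarith [h0]

theorem cs_ineq_aux {n : ℕ} (A : Matrix (Fin n) (Fin n) ℝ) (hA : A.PosDef)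
    (x y : Fin n → ℝ) :
    (y ⬝ᵥ A.mulVec x) ^ 2 ≤ (y ⬝ᵥ A.mulVec y) * (x ⬝ᵥ A.mulVec x) := by
  set S := CFC.sqrt A with hSdef
  have hSS : S * S = A := CFC.sqrt_mul_sqrt_self A hA.posSemidef.nonneg
  have hSherm : Sᴴ = S := (CFC.sqrt_nonneg A).posSemidef.isHermitian
  have hSt : Sᵀ = S := by ext i j; simpa using congrFun (congrFun hSherm i) j
  have key : ∀ u v : Fin n → ℝ, u ⬝ᵥ A.mulVec v = (S.mulVec u) ⬝ᵥ (S.mulVec v) := by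
    intro u v
    rw [← hSS, ← mulVec_mulVec, dotProduct_mulVec, ← mulVec_transpose, hSt]
  rw [key y x, key y y, key x x]
  set u := S.mulVec y
  set v := S.mulVec x
  have h1 : u ⬝ᵥ v = ∑ i, u i * v i := rfl
  have h2 : u ⬝ᵥ u = ∑ i, u i ^ 2 := by simp [dotProduct, sq]
  have h3 : v ⬝ᵥ v = ∑ i, v i ^ 2 := by simp [dotProduct, sq]
  rw [h1, h2, h3]
  exact Finset.sum_mul_sq_le_sq_mul_sq _ _ _

theorem vv_quad_aux {n : ℕ} (v y : Fin n → ℝ) :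
    y ⬝ᵥ (vecMulVec v v).mulVec y = (v ⬝ᵥ y) ^ 2 := by
  simp only [dotProduct, mulVec, vecMulVec_apply, dotProduct, sq, Finset.mul_sum,
    Finset.sum_mul]
  refine Finset.sum_congr rfl fun i _ => Finset.sum_congr rfl fun j _ => by ring

/-- For a symmetric positive definite matrix `A` and `1 < γ < 2`, the rank-one corrected matrix
`A + (γ-2)(Ax)(Ax)ᵀ/(xᵀAx)` has quadratic form bounded below by `(γ-1)λ₁|y|²`, where `λ₁` is
the smallest eigenvalue of `A`; in particular it is positive definite. -/
theorem stmt_4 {n : ℕ} (A : Matrix (Fin n) (Fin n) ℝ) (hA : A.PosDef)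
    (γ : ℝ) (hγ1 : 1 < γ) (hγ2 : γ < 2) (x : Fin n → ℝ) (hx : x ≠ 0) :
    (∀ y : Fin n → ℝ,
      (γ - 1) * (⨅ i, hA.isHermitian.eigenvalues i) * (∑ i, y i ^ 2) ≤
        y ⬝ᵥ (A + ((γ - 2) / (x ⬝ᵥ A.mulVec x)) •
          vecMulVec (A.mulVec x) (A.mulVec x)).mulVec y) ∧
    (A + ((γ - 2) / (x ⬝ᵥ A.mulVec x)) • vecMulVec (A.mulVec x) (A.mulVec x)).PosDef := by
  have hn : Nonempty (Fin n) := by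
    rcases isEmpty_or_nonempty (Fin n) with h | h
    · exact absurd (Subsingleton.elim x 0) hx
    · exact h
  set c : ℝ := ⨅ i, hA.isHermitian.eigenvalues i with hcdef
  have hc : ∀ i, c ≤ hA.isHermitian.eigenvalues i := fun i =>
    ciInf_le (Set.finite_range _).bddBelow i
  have hcpos : 0 < c := by
    obtain ⟨i, hi⟩ := exists_eq_ciInf_of_finite (f := hA.isHermitian.eigenvalues)
    rw [hcdef, ← hi]
    exact hA.eigenvalues_pos i
  have hxAx : 0 < x ⬝ᵥ A.mulVec x := by
    have := hA.dotProduct_mulVec_pos hx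
    simpa using this
  set d : ℝ := (γ - 2) / (x ⬝ᵥ A.mulVec x) with hddef
  have hd : d ≤ 0 := by
    rw [hddef]
    apply div_nonpos_of_nonpos_of_nonneg <;> linarith
  have key : ∀ y : Fin n → ℝ,
      (γ - 1) * c * (∑ i, y i ^ 2) ≤
        y ⬝ᵥ (A + d • vecMulVec (A.mulVec x) (A.mulVec x)).mulVec y := by
    intro y
    have hquad : y ⬝ᵥ (A + d • vecMulVec (A.mulVec x) (A.mulVec x)).mulVec y =
        y ⬝ᵥ A.mulVec y + d * ((A.mulVec x) ⬝ᵥ y) ^ 2 := by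
      rw [add_mulVec, dotProduct_add, smul_mulVec, dotProduct_smul, smul_eq_mul,
        vv_quad_aux]
    have hcomm : (A.mulVec x) ⬝ᵥ y = y ⬝ᵥ A.mulVec x := dotProduct_comm _ _
    have hcs := cs_ineq_aux A hA x y
    have hlb := quad_lb_aux A hA c hc y
    have hsum : (0:ℝ) ≤ ∑ i, y i ^ 2 := Finset.sum_nonneg fun i _ => sq_nonneg _
    have hyAy : 0 ≤ y ⬝ᵥ A.mulVec y := le_trans (by positivity) hlb
    -- d * (y A x)^2 ≥ d * (yAy * xAx)
    have h1 : d * ((y ⬝ᵥ A.mulVec x) ^ 2) ≥ d * ((y ⬝ᵥ A.mulVec y) * (x ⬝ᵥ A.mulVec x)) :=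
      mul_le_mul_of_nonpos_left hcs hd
    have h2 : d * ((y ⬝ᵥ A.mulVec y) * (x ⬝ᵥ A.mulVec x)) = (γ - 2) * (y ⬝ᵥ A.mulVec y) := by
      rw [hddef]
      field_simp
    rw [hquad, hcomm]
    have h3 : (γ - 1) * (y ⬝ᵥ A.mulVec y) ≤ y ⬝ᵥ A.mulVec y + d * (y ⬝ᵥ A.mulVec x) ^ 2 := by
      rw [ge_iff_le, h2] at h1
      linarith
    calc (γ - 1) * c * (∑ i, y i ^ 2) = (γ - 1) * (c * ∑ i, y i ^ 2) := by ring
      _ ≤ (γ - 1) * (y ⬝ᵥ A.mulVec y) := by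
          apply mul_le_mul_of_nonneg_left hlb (by linarith)
      _ ≤ _ := h3
  refine ⟨key, ?_⟩
  rw [posDef_iff_dotProduct_mulVec]
  constructor
  · -- Hermitian
    apply hA.isHermitian.add
    show _ = _
    ext i j
    simp [conjTranspose_apply, vecMulVec_apply, mul_comm]
  · intro y hy
    have hsum : 0 < ∑ i, y i ^ 2 := by
      obtain ⟨i, hi⟩ : ∃ i, y i ≠ 0 := Function.ne_iff.mp hy
      exact Finset.sum_pos' (fun j _ => sq_nonneg _)
        ⟨i, Finset.mem_univ i, by positivity⟩
    have := key y
    have hpos : 0 < (γ - 1) * c * (∑ i, y i ^ 2) := by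
      have : 0 < γ - 1 := by linarith
      positivity
    simp only [star_trivial, RCLike.ofReal_real_eq_id, id]
    calc (0:ℝ) < (γ - 1) * c * (∑ i, y i ^ 2) := hpos
      _ ≤ _ := key y
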